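/- Let k ≥ 3 be an odd integer and set p := k − 2 (odd). Let {v_1,…,v_n} be an orthonormal basis of ℝ^n and κ_r < 0, λ_r ∈ ℝ for r = 1,…,n. For each r with λ_r ≠ 0 let c_r be the unique real root of κ_r + λ_r s^p = 0 (so c_r > 0 when λ_r > 0 and c_r < 0 when λ_r < 0), and define ℛ_odd := { x₀ ∈ ℝ^n : ⟨v_r, x₀⟩ < c_r for all r with λ_r > 0, and ⟨v_r, x₀⟩ > c_r for all r with λ_r < 0 }. Then for every differentiable solution x : [0,∞) → ℝ^n of ẋ(t) = Σ_{r=1}^n (κ_r·⟨v_r, x(t)⟩ + λ_r·⟨v_r, x(t)⟩^{k-1})·v_r with x(0) ∈ ℛ_odd, one has x(t) ∈ ℛ_odd for all t ≥ 0 and x(t) → 0 as t → ∞. -/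

import Mathlib

open Set Filter

lemma monoOn_of_hasDerivAt {s : Set ℝ} (hs : Convex ℝ s) (f f' : ℝ → ℝ)
    (hf : ∀ t ∈ s, HasDerivAt f (f' t) t) (h' : ∀ t ∈ interior s, 0 ≤ f' t) :
    MonotoneOn f s := by
  refine monotoneOn_of_deriv_nonneg hs (fun t ht => (hf t ht).continuousAt.continuousWithinAt)
    (fun t ht => (hf t (interior_subset ht)).differentiableAt.differentiableWithinAt)
    (fun t ht => ?_)
  rw [(hf t (interior_subset ht)).deriv]; exact h' t ht

lemma antiOn_of_hasDerivAt {s : Set ℝ} (hs : Convex ℝ s) (f f' : ℝ → ℝ)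
    (hf : ∀ t ∈ s, HasDerivAt f (f' t) t) (h' : ∀ t ∈ interior s, f' t ≤ 0) :
    AntitoneOn f s := by
  refine antitoneOn_of_deriv_nonpos hs (fun t ht => (hf t ht).continuousAt.continuousWithinAt)
    (fun t ht => (hf t (interior_subset ht)).differentiableAt.differentiableWithinAt)
    (fun t ht => ?_)
  rw [(hf t (interior_subset ht)).deriv]; exact h' t ht

lemma abs_pow_sub_pow_le' (a b M : ℝ) (m : ℕ) (ha : |a| ≤ M) (hb : |b| ≤ M) :
    |a ^ m - b ^ m| ≤ (m : ℝ) * M ^ (m - 1) * |a - b| := by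
  have hM : 0 ≤ M := le_trans (abs_nonneg a) ha
  rw [← geom_sum₂_mul a b m, abs_mul]
  gcongr
  calc |∑ i ∈ Finset.range m, a ^ i * b ^ (m - 1 - i)|
      ≤ ∑ i ∈ Finset.range m, |a ^ i * b ^ (m - 1 - i)| := Finset.abs_sum_le_sum_abs _ _
    _ ≤ ∑ i ∈ Finset.range m, M ^ (m - 1) := by
        refine Finset.sum_le_sum fun i hi => ?_
        rw [abs_mul, abs_pow, abs_pow]
        calc |a| ^ i * |b| ^ (m - 1 - i) ≤ M ^ i * M ^ (m - 1 - i) := by gcongr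
          _ = M ^ (m - 1) := by
              rw [← pow_add]; congr 1
              have := Finset.mem_range.1 hi; omega
    _ = (m : ℝ) * M ^ (m - 1) := by rw [Finset.sum_const, Finset.card_range, nsmul_eq_mul]

lemma core_scalar (p : ℕ) (hp : Odd p) (κ lam c : ℝ) (hκ : κ < 0) (hlam : 0 ≤ lam)
    (hc : 0 < lam → 0 < c ∧ κ + lam * c ^ p = 0)
    (y : ℝ → ℝ)
    (hy : ∀ t, 0 ≤ t → HasDerivAt y (y t * (κ + lam * y t ^ p)) t)
    (h0 : 0 < lam → y 0 < c) :
    (∀ t, 0 ≤ t → 0 < lam → y t < c) ∧ Tendsto y atTop (nhds 0) := by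
  set g : ℝ → ℝ := fun s => κ + lam * s ^ p with hg
  have gmono : Monotone g := fun a b hab => by
    have : a ^ p ≤ b ^ p := hp.strictMono_pow.monotone hab
    have := mul_le_mul_of_nonneg_left this hlam
    simp only [hg]; linarith
  have hgneg : ∀ s : ℝ, (0 < lam → s < c) → g s < 0 := by
    intro s hs
    rcases hlam.lt_or_eq with hl | hl
    · obtain ⟨hcpos, hceq⟩ := hc hl
      have h1 : s ^ p < c ^ p := hp.strictMono_pow (hs hl)
      have := mul_lt_mul_of_pos_left h1 hl
      simp only [hg]; linarith
    · simp only [hg, ← hl, zero_mul, add_zero]; exact hκ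
  have hcont : ∀ t : ℝ, 0 ≤ t → ContinuousAt y t := fun t ht => (hy t ht).continuousAt
  -- forward invariance
  have hinv : ∀ t, 0 ≤ t → 0 < lam → y t < c := by
    rcases hlam.lt_or_eq with hl | hl
    swap
    · intro t ht hl'; exact absurd hl' (by rw [← hl]; exact lt_irrefl 0)
    obtain ⟨hcpos, hceq⟩ := hc hl
    have hy0 : y 0 < c := h0 hl
    intro t ht _
    by_contra hcon
    push_neg at hcon
    -- set of crossing times
    set S : Set ℝ := {s | 0 ≤ s ∧ c ≤ y s} with hS
    have hSne : S.Nonempty := ⟨t, ht, hcon⟩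
    have hSbdd : BddBelow S := ⟨0, fun s hs => hs.1⟩
    have hScl : IsClosed S := by
      have h1 : ContinuousOn y (Ici (0:ℝ)) := fun s hs => (hcont s hs).continuousWithinAt
      have h2 : S = Ici 0 ∩ y ⁻¹' (Ici c) := by ext s; simp [hS]
      rw [h2]
      exact h1.preimage_isClosed_of_isClosed isClosed_Ici (isClosed_Ici (a := c))
    set t₁ := sInf S with ht₁def
    have ht₁S : t₁ ∈ S := hScl.csInf_mem hSne hSbdd
    have ht₁0 : 0 ≤ t₁ := ht₁S.1
    have hcontOn : ContinuousOn y (Icc 0 t₁) := fun s hs => (hcont s hs.1).continuousWithinAt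
    have hyt₁ : y t₁ = c := by
      obtain ⟨s, hsmem, hsval⟩ :=
        intermediate_value_Icc ht₁0 hcontOn ⟨hy0.le, ht₁S.2⟩
      have h1 : t₁ ≤ s := csInf_le hSbdd ⟨hsmem.1, hsval.ge⟩
      have h2 : s = t₁ := le_antisymm hsmem.2 h1
      rw [← h2]; exact hsval
    have hbefore : ∀ s, 0 ≤ s → s < t₁ → y s < c := by
      intro s hs hst
      by_contra h; push_neg at h
      exact absurd (csInf_le hSbdd ⟨hs, h⟩) (not_le.2 hst)
    have hyle : ∀ s ∈ Icc (0:ℝ) t₁, y s ≤ c := by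
      intro s hs
      rcases lt_or_eq_of_le hs.2 with h | h
      · exact (hbefore s hs.1 h).le
      · rw [h, hyt₁]
    obtain ⟨M, hM⟩ := isCompact_Icc.exists_bound_of_continuousOn hcontOn
    set M' := max M |c| with hM'def
    have hM'y : ∀ s ∈ Icc (0:ℝ) t₁, |y s| ≤ M' := fun s hs =>
      le_trans (by simpa [Real.norm_eq_abs] using hM s hs) (le_max_left _ _)
    have hM'c : |c| ≤ M' := le_max_right _ _
    set L := |κ| + lam * (((p:ℝ) + 1) * M' ^ p) with hLdef
    have hM'0 : 0 ≤ M' := le_trans (abs_nonneg c) hM'c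
    have hL0 : 0 ≤ L := by positivity
    have key : ∀ s ∈ Icc (0:ℝ) t₁, y s * g (y s) ≤ L * (c - y s) := by
      intro s hs
      have hac : y s ≤ c := hyle s hs
      have e1 : y s * g (y s)
          = κ * (y s - c) + lam * (y s ^ (p + 1) - c ^ (p + 1)) + (κ + lam * c ^ p) * c := by
        simp only [hg]; ring
      rw [e1, hceq, zero_mul, add_zero]
      have b1 : κ * (y s - c) ≤ |κ| * (c - y s) := by
        have he : κ * (y s - c) = -κ * (c - y s) := by ring
        rw [he, abs_of_neg hκ]
      have b2 : lam * (y s ^ (p + 1) - c ^ (p + 1))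
          ≤ lam * (((p:ℝ) + 1) * M' ^ p) * (c - y s) := by
        have h3 := abs_pow_sub_pow_le' (y s) c M' (p + 1) (hM'y s hs) hM'c
        have h4 : ((p:ℕ) + 1 : ℕ) - 1 = p := by omega
        rw [h4] at h3
        have h5 : |y s - c| = c - y s := by
          rw [← abs_neg, neg_sub]; exact abs_of_nonneg (sub_nonneg.2 hac)
        rw [h5] at h3
        have h6 : y s ^ (p + 1) - c ^ (p + 1) ≤ ((p:ℝ) + 1) * M' ^ p * (c - y s) := by
          calc y s ^ (p + 1) - c ^ (p + 1) ≤ |y s ^ (p + 1) - c ^ (p + 1)| := le_abs_self _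
            _ ≤ ((p:ℝ) + 1) * M' ^ p * (c - y s) := by
                convert h3 using 2; push_cast; ring
        calc lam * (y s ^ (p + 1) - c ^ (p + 1))
            ≤ lam * (((p:ℝ) + 1) * M' ^ p * (c - y s)) := mul_le_mul_of_nonneg_left h6 hlam
          _ = lam * (((p:ℝ) + 1) * M' ^ p) * (c - y s) := by ring
      calc κ * (y s - c) + lam * (y s ^ (p + 1) - c ^ (p + 1))
          ≤ |κ| * (c - y s) + lam * (((p:ℝ) + 1) * M' ^ p) * (c - y s) := add_le_add b1 b2
        _ = L * (c - y s) := by rw [hLdef]; ring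
    -- monotone auxiliary function
    set u : ℝ → ℝ := fun s => (c - y s) * Real.exp (L * s) with hu
    have hud : ∀ s ∈ Icc (0:ℝ) t₁,
        HasDerivAt u ((-(y s * g (y s)) + (c - y s) * L) * Real.exp (L * s)) s := by
      intro s hs
      have d1 : HasDerivAt (fun s => c - y s) (-(y s * g (y s))) s := (hy s hs.1).const_sub c
      have d2 : HasDerivAt (fun s => Real.exp (L * s)) (Real.exp (L * s) * L) s := by
        have : HasDerivAt (fun s : ℝ => L * s) L s := by
          simpa using (hasDerivAt_id s).const_mul L
        exact this.exp
      have := d1.mul d2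
      exact this.congr_deriv (by ring)
    have humono : MonotoneOn u (Icc 0 t₁) := by
      refine monoOn_of_hasDerivAt (convex_Icc 0 t₁) u _ hud fun s hsint => ?_
      rw [interior_Icc] at hsint
      have hs : s ∈ Icc (0:ℝ) t₁ := Ioo_subset_Icc_self hsint
      have h1 := key s hs
      have h2 : (0:ℝ) < Real.exp (L * s) := Real.exp_pos _
      nlinarith
    have h1 : u 0 ≤ u t₁ := humono ⟨le_refl 0, ht₁0⟩ ⟨ht₁0, le_refl t₁⟩ ht₁0
    have h2 : u 0 = c - y 0 := by simp [hu]
    have h3 : u t₁ = 0 := by simp [hu, hyt₁]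
    rw [h2, h3] at h1
    linarith
  -- convergence
  have hgy : ∀ t, 0 ≤ t → g (y t) < 0 := fun t ht => hgneg (y t) (hinv t ht)
  have hWanti : AntitoneOn (fun t => y t ^ 2) (Ici 0) := by
    refine antiOn_of_hasDerivAt (convex_Ici 0) _
      (fun t => (2:ℝ) * y t ^ 1 * (y t * (κ + lam * y t ^ p))) (fun t ht => (hy t ht).pow 2) ?_
    intro t ht; rw [interior_Ici] at ht
    have h1 := hgy t ht.le
    simp only [hg] at h1
    show (2:ℝ) * y t ^ 1 * (y t * (κ + lam * y t ^ p)) ≤ 0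
    nlinarith [sq_nonneg (y t)]
  have main : ∀ ε : ℝ, 0 < ε → ∃ T, 0 ≤ T ∧ ∀ t, T ≤ t → |y t| ≤ ε := by
    intro ε hε
    have hT : ∃ T, 0 ≤ T ∧ |y T| ≤ ε := by
      by_contra hcon
      push_neg at hcon
      have h00 : ε < |y 0| := hcon 0 le_rfl
      rcases lt_trichotomy (y 0) 0 with hneg | hzero | hpos
      · have hy0 : y 0 < -ε := by rw [abs_of_neg hneg] at h00; linarith
        have hall : ∀ t, 0 ≤ t → y t < -ε := by
          intro t ht
          by_contra h; push_neg at h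
          obtain ⟨s, hsmem, hsval⟩ := intermediate_value_Icc ht
            (fun s hs => (hcont s hs.1).continuousWithinAt) (⟨hy0.le, h⟩ : -ε ∈ Icc (y 0) (y t))
          have h2 := hcon s hsmem.1
          rw [hsval, abs_neg, abs_of_pos hε] at h2
          exact lt_irrefl _ h2
        set δ := ε * (-κ) with hδdef
        have hδ : 0 < δ := mul_pos hε (neg_pos.2 hκ)
        have hder : ∀ t, 0 ≤ t → δ ≤ y t * (κ + lam * y t ^ p) := by
          intro t ht
          have h1 : y t < -ε := hall t ht
          have hyp : y t ^ p ≤ 0 := hp.pow_nonpos (by linarith)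
          have h2' : lam * y t ^ p ≤ 0 := mul_nonpos_iff.2 (Or.inl ⟨hlam, hyp⟩)
          have h2 : g (y t) ≤ κ := by simp only [hg]; linarith
          have h3 : -ε * g (y t) ≤ y t * g (y t) :=
            mul_le_mul_of_nonpos_right h1.le (h2.trans hκ.le)
          have h4 : -ε * κ ≤ -ε * g (y t) :=
            mul_le_mul_of_nonpos_left h2 (by linarith)
          simp only [hg] at h3 h4
          have h5 : δ = -ε * κ := by rw [hδdef]; ring
          linarith
        have wmono : MonotoneOn (fun t => y t - δ * t) (Ici 0) := by
          refine monoOn_of_hasDerivAt (convex_Ici 0) _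
            (fun t => y t * (κ + lam * y t ^ p) - δ) (fun t ht => ?_) ?_
          · exact (hy t ht).sub (by simpa using (hasDerivAt_id t).const_mul δ)
          · intro t ht; rw [interior_Ici] at ht
            have := hder t ht.le
            show 0 ≤ y t * (κ + lam * y t ^ p) - δ
            linarith
        set t₂ := (-ε - y 0) / δ with ht₂def
        have ht₂0 : 0 ≤ t₂ := div_nonneg (by linarith) hδ.le
        have h5 : y 0 - δ * 0 ≤ y t₂ - δ * t₂ := wmono self_mem_Ici (mem_Ici.2 ht₂0) ht₂0
        have h6 : δ * t₂ = -ε - y 0 := by rw [ht₂def]; field_simp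
        have h7 := hall t₂ ht₂0
        linarith
      · rw [hzero, abs_zero] at h00; linarith
      · have hy0 : ε < y 0 := by rwa [abs_of_pos hpos] at h00
        have hall : ∀ t, 0 ≤ t → ε < y t := by
          intro t ht
          by_contra h; push_neg at h
          obtain ⟨s, hsmem, hsval⟩ := intermediate_value_Icc' ht
            (fun s hs => (hcont s hs.1).continuousWithinAt) (⟨h, hy0.le⟩ : ε ∈ Icc (y t) (y 0))
          have h2 := hcon s hsmem.1
          rw [hsval, abs_of_pos hε] at h2
          exact lt_irrefl _ h2
        have yanti : AntitoneOn y (Ici 0) := by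
          refine antiOn_of_hasDerivAt (convex_Ici 0) _ _ (fun t ht => hy t ht) ?_
          intro t ht; rw [interior_Ici] at ht
          have h1 := hgy t ht.le
          have h2 : 0 < y t := lt_trans hε (hall t ht.le)
          simp only [hg] at h1
          nlinarith [mul_pos h2 (neg_pos.2 h1)]
        set G := g (y 0) with hGdef
        have hG : G < 0 := hgy 0 le_rfl
        have hder : ∀ t, 0 ≤ t → y t * (κ + lam * y t ^ p) ≤ ε * G := by
          intro t ht
          have h1 : g (y t) ≤ G := gmono (yanti self_mem_Ici (mem_Ici.2 ht) ht)
          have h2 : y t * g (y t) ≤ ε * g (y t) :=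
            mul_le_mul_of_nonpos_right (hall t ht).le (h1.trans hG.le)
          have h3 : ε * g (y t) ≤ ε * G := mul_le_mul_of_nonneg_left h1 hε.le
          simp only [hg] at h2 h3 ⊢
          linarith
        have wanti : AntitoneOn (fun t => y t - ε * G * t) (Ici 0) := by
          refine antiOn_of_hasDerivAt (convex_Ici 0) _
            (fun t => y t * (κ + lam * y t ^ p) - ε * G) (fun t ht => ?_) ?_
          · exact (hy t ht).sub (by simpa using (hasDerivAt_id t).const_mul (ε * G))
          · intro t ht; rw [interior_Ici] at ht
            have := hder t ht.le
            show y t * (κ + lam * y t ^ p) - ε * G ≤ 0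
            linarith
        have hεG : 0 < -(ε * G) := neg_pos.2 (mul_neg_of_pos_of_neg hε hG)
        set t₂ := (y 0 - ε + 1) / (-(ε * G)) with ht₂def
        have ht₂0 : 0 ≤ t₂ := div_nonneg (by linarith) hεG.le
        have h5 : y t₂ - ε * G * t₂ ≤ y 0 - ε * G * 0 :=
          wanti self_mem_Ici (mem_Ici.2 ht₂0) ht₂0
        have h6 : ε * G * t₂ = -(y 0 - ε + 1) := by
          rw [ht₂def]
          have hne : ε * G ≠ 0 := mul_ne_zero hε.ne' hG.ne
          rw [div_neg, mul_neg, mul_div_assoc', mul_div_cancel_left₀ _ hne]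
        have h7 := hall t₂ ht₂0
        linarith
    obtain ⟨T, hT0, hTv⟩ := hT
    refine ⟨T, hT0, fun t ht => ?_⟩
    have h1 : y t ^ 2 ≤ y T ^ 2 := hWanti (mem_Ici.2 hT0) (mem_Ici.2 (hT0.trans ht)) ht
    nlinarith [abs_nonneg (y t), abs_nonneg (y T), sq_abs (y t), sq_abs (y T)]
  refine ⟨hinv, ?_⟩
  rw [Metric.tendsto_atTop]
  intro ε hε
  obtain ⟨T, hT0, h⟩ := main (ε / 2) (by linarith)
  refine ⟨T, fun t ht => ?_⟩
  rw [Real.dist_eq, sub_zero]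
  exact lt_of_le_of_lt (h t ht) (by linarith)

lemma scalar_full (p : ℕ) (hp : Odd p) (κ lam c : ℝ) (hκ : κ < 0)
    (hc : lam ≠ 0 → κ + lam * c ^ p = 0)
    (hcpos : 0 < lam → 0 < c) (hcneg : lam < 0 → c < 0)
    (y : ℝ → ℝ)
    (hy : ∀ t, 0 ≤ t → HasDerivAt y (y t * (κ + lam * y t ^ p)) t)
    (h0l : 0 < lam → y 0 < c) (h0r : lam < 0 → c < y 0) :
    (∀ t, 0 ≤ t → (0 < lam → y t < c) ∧ (lam < 0 → c < y t))
      ∧ Tendsto y atTop (nhds 0) := by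
  rcases le_or_gt 0 lam with hl | hl
  · have h := core_scalar p hp κ lam c hκ hl (fun h => ⟨hcpos h, hc (ne_of_gt h)⟩) y hy h0l
    exact ⟨fun t ht => ⟨h.1 t ht, fun h' => absurd h' (not_lt.2 hl)⟩, h.2⟩
  · have hll : (0:ℝ) ≤ -lam := by linarith
    have hy' : ∀ t, 0 ≤ t →
        HasDerivAt (fun t => -(y t)) ((-(y t)) * (κ + (-lam) * (-(y t)) ^ p)) t := by
      intro t ht
      have h1 := (hy t ht).neg
      exact h1.congr_deriv (by rw [hp.neg_pow (y t)]; ring)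
    have hceq : κ + -lam * (-c) ^ p = 0 := by
      have h1 := hc (ne_of_lt hl)
      rw [hp.neg_pow c]; ring_nf; ring_nf at h1; linarith
    have h := core_scalar p hp κ (-lam) (-c) hκ hll
      (fun _ => ⟨by linarith [hcneg hl], hceq⟩)
      (fun t => -(y t)) hy' (fun _ => by have := h0r hl; show -(y 0) < -c; linarith)
    obtain ⟨hinv, htend⟩ := h
    constructor
    · intro t ht
      refine ⟨fun h' => absurd h' (not_lt.2 hl.le), fun _ => ?_⟩
      have h3 : -(y t) < -c := hinv t ht (by linarith)
      linarith
    · have h2 : Tendsto (fun t => -(-(y t))) atTop (nhds (-(0:ℝ))) := htend.neg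
      simpa using h2

/-- Odd-degree region of attraction ℛ_odd is forward invariant and
attracts to the origin. -/
theorem stmt_9 (k n : ℕ) (hk : 3 ≤ k) (hko : Odd k)
    (v : OrthonormalBasis (Fin n) ℝ (EuclideanSpace ℝ (Fin n)))
    (κ lam : Fin n → ℝ) (hκ : ∀ r, κ r < 0)
    (p : ℕ) (hp : p = k - 2)
    (c : Fin n → ℝ)
    (hc : ∀ r, lam r ≠ 0 → κ r + lam r * c r ^ p = 0)
    (hcsign : ∀ r, (0 < lam r → 0 < c r) ∧ (lam r < 0 → c r < 0))
    (R : Set (EuclideanSpace ℝ (Fin n)))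
    (hR : R = {x₀ | (∀ r, 0 < lam r → (inner ℝ (v r) x₀ : ℝ) < c r)
      ∧ (∀ r, lam r < 0 → c r < (inner ℝ (v r) x₀ : ℝ))})
    (x : ℝ → EuclideanSpace ℝ (Fin n))
    (hx : ∀ t : ℝ, 0 ≤ t →
      HasDerivAt x
        (∑ r, (κ r * (inner ℝ (v r) (x t) : ℝ)
          + lam r * (inner ℝ (v r) (x t) : ℝ) ^ (k - 1)) • v r) t)
    (hx0 : x 0 ∈ R) :
    (∀ t : ℝ, 0 ≤ t → x t ∈ R)
    ∧ Filter.Tendsto x Filter.atTop (nhds 0) := by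
  have hpodd : Odd p := by
    subst hp
    exact Nat.Odd.sub_even (by omega) hko (by decide)
  have hk1 : k - 1 = p + 1 := by omega
  set y : Fin n → ℝ → ℝ := fun r t => (inner ℝ (v r) (x t) : ℝ) with hydef
  have horth : ∀ r s : Fin n, (inner ℝ (v r) (v s) : ℝ) = if r = s then 1 else 0 :=
    orthonormal_iff_ite.mp v.orthonormal
  have hyder : ∀ r, ∀ t, 0 ≤ t →
      HasDerivAt (y r) (y r t * (κ r + lam r * (y r t) ^ p)) t := by
    intro r t ht
    have hD := hx t ht
    have hL := (innerSL ℝ (v r)).hasFDerivAt.comp_hasDerivAt t hD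
    have hval : (innerSL ℝ (v r)) (∑ s, (κ s * (inner ℝ (v s) (x t) : ℝ)
        + lam s * (inner ℝ (v s) (x t) : ℝ) ^ (k - 1)) • v s)
        = y r t * (κ r + lam r * (y r t) ^ p) := by
      rw [map_sum]
      have : ∀ s : Fin n, (innerSL ℝ (v r)) ((κ s * (inner ℝ (v s) (x t) : ℝ)
          + lam s * (inner ℝ (v s) (x t) : ℝ) ^ (k - 1)) • v s)
          = (κ s * y s t + lam s * (y s t) ^ (k - 1)) * (if r = s then 1 else 0) := by
        intro s
        rw [map_smul]
        simp only [smul_eq_mul, innerSL_apply_apply, horth r s, hydef]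
      rw [Finset.sum_congr rfl fun s _ => this s]
      simp only [mul_ite, mul_one, mul_zero]
      rw [Finset.sum_ite_eq Finset.univ r
        (fun s => κ s * y s t + lam s * (y s t) ^ (k - 1))]
      simp only [Finset.mem_univ, if_true]
      rw [hk1, pow_succ]
      ring
    rw [hval] at hL
    exact hL
  have hx0' : (∀ r, 0 < lam r → y r 0 < c r) ∧ (∀ r, lam r < 0 → c r < y r 0) := by
    rw [hR] at hx0; exact hx0
  have hres : ∀ r, (∀ t, 0 ≤ t → (0 < lam r → y r t < c r) ∧ (lam r < 0 → c r < y r t))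
      ∧ Filter.Tendsto (y r) Filter.atTop (nhds 0) := fun r =>
    scalar_full p hpodd (κ r) (lam r) (c r) (hκ r) (hc r) (hcsign r).1 (hcsign r).2
      (y r) (hyder r) (fun h => hx0'.1 r h) (fun h => hx0'.2 r h)
  constructor
  · intro t ht
    rw [hR]
    exact ⟨fun r hr => ((hres r).1 t ht).1 hr, fun r hr => ((hres r).1 t ht).2 hr⟩
  · have hxeq : x = fun t => ∑ r, y r t • v r := by
      funext t; exact (v.sum_repr' (x t)).symm
    rw [hxeq]
    have h1 : Filter.Tendsto (fun t => ∑ r, y r t • v r) Filter.atTop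
        (nhds (∑ r : Fin n, (0:ℝ) • v r)) :=
      tendsto_finset_sum _ (fun r _ => ((hres r).2).smul_const (v r))
    simpa using h1
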